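/- Let m > 1 be an odd integer divisible by 3, let E_m be the elliptic curve over ℚ defined by y² = x³ - x + m⁶, and let P = (0, m³) and R = (-m², m) be rational points on E_m. Then the point P + R does not lie in 2E_m(ℚ); i.e., P + R is nontrivial in E_m(ℚ)/2E_m(ℚ). -/

import Mathlib

open WeierstrassCurve.Affine WeierstrassCurve.Affine.Point

/-- The elliptic curve `E_m : y² = x³ - x + m⁶` over `ℚ`. -/
def Em (m : ℤ) : WeierstrassCurve ℚ := ⟨0, 0, 0, -1, (m : ℚ) ^ 6⟩

/-- The doubling map `P ↦ 2 • P` as an additive group homomorphism; its range is the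
subgroup `2A` of `A`. -/
def doublingHom (A : Type*) [AddCommGroup A] : A →+ A :=
  AddMonoidHom.mk' (fun a => 2 • a) (fun a b => smul_add 2 a b)

set_option maxHeartbeats 4000000 in
lemma key16a : ∀ k u v : ZMod 16,
  (2*k+1)^2*(2*u+1)^4 - 4*(2*(2*k+1)^4-2*(2*k+1)^2+1)*(2*u+1)^3*v + 2*(2*k+1)^2*(2*u+1)^2*v^2 + (4*(2*(2*k+1)^4-2*(2*k+1)^2+1)-8*(2*k+1)^8)*(2*u+1)*v^3 + ((2*k+1)^2-4*(2*(2*k+1)^4-2*(2*k+1)^2+1)*(2*k+1)^6)*v^4 ≠ 0 := by decide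

set_option maxHeartbeats 4000000 in
lemma key16b : ∀ k u v : ZMod 16,
  (2*k+1)^2*u^4 - 4*(2*(2*k+1)^4-2*(2*k+1)^2+1)*u^3*(2*v+1) + 2*(2*k+1)^2*u^2*(2*v+1)^2 + (4*(2*(2*k+1)^4-2*(2*k+1)^2+1)-8*(2*k+1)^8)*u*(2*v+1)^3 + ((2*k+1)^2-4*(2*(2*k+1)^4-2*(2*k+1)^2+1)*(2*k+1)^6)*(2*v+1)^4 ≠ 0 := by decide

lemma keyZ (m a b : ℤ) (hm : Odd m) (hab : Odd a ∨ Odd b) :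
    m^2*a^4 - 4*(2*m^4-2*m^2+1)*a^3*b + 2*m^2*a^2*b^2 + (4*(2*m^4-2*m^2+1)-8*m^8)*a*b^3
      + (m^2-4*(2*m^4-2*m^2+1)*m^6)*b^4 ≠ 0 := by
  intro h0
  obtain ⟨k, hk⟩ := hm
  subst hk
  have h16 := congrArg (fun z : ℤ => (z : ZMod 16)) h0
  push_cast at h16
  rcases hab with ⟨u, hu⟩ | ⟨v, hv⟩
  · subst hu
    exact key16a (k : ZMod 16) (u : ZMod 16) (b : ZMod 16) (by push_cast at h16 ⊢; linear_combination h16)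
  · subst hv
    exact key16b (k : ZMod 16) (a : ZMod 16) (v : ZMod 16) (by push_cast at h16 ⊢; linear_combination h16)


/-- For `m > 1` odd and divisible by `3`, with `P = (0, m³)` and `R = (-m², m)` on
`E_m : y² = x³ - x + m⁶`, the point `P + R` does not lie in `2E_m(ℚ)`, i.e. `P + R` is
nontrivial in `E_m(ℚ)/2E_m(ℚ)`. -/
theorem Em_PR_nontrivial_mod_two
    (m : ℤ) (hm : 1 < m) (hodd : Odd m) (h3 : (3 : ℤ) ∣ m)
    (hP : (Em m).toAffine.Nonsingular 0 ((m : ℚ) ^ 3))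
    (hR : (Em m).toAffine.Nonsingular (-(m : ℚ) ^ 2) (m : ℚ)) :
    WeierstrassCurve.Affine.Point.some _ _ hP + WeierstrassCurve.Affine.Point.some _ _ hR ∉
      (doublingHom (Em m).toAffine.Point).range := by
  have hm0 : (m : ℚ) ≠ 0 := by
    have : (0:ℚ) < (m:ℚ) := by exact_mod_cast (by omega : (0:ℤ) < m)
    linarith
  have hxPR : (0 : ℚ) ≠ -(m : ℚ) ^ 2 := by
    intro h; apply hm0; nlinarith [sq_nonneg ((m:ℚ))]
  rw [add_of_X_ne hxPR]
  rintro ⟨Q, hQ⟩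
  simp only [doublingHom, AddMonoidHom.mk'_apply, two_smul] at hQ
  rcases Q with _ | @⟨x, y, hQ'⟩
  · change (0 : (Em m).toAffine.Point) + 0 = _ at hQ
    rw [add_zero] at hQ
    exact some_ne_zero _ hQ.symm
  · by_cases hy : y = (Em m).toAffine.negY x y
    · rw [add_self_of_Y_eq hy] at hQ
      exact some_ne_zero _ hQ.symm
    · rw [add_self_of_Y_ne hy] at hQ
      injection hQ with h1 h2
      have hy0 : y ≠ 0 := by
        intro h0
        apply hy
        simp only [negY, Em, WeierstrassCurve.toAffine, h0]
        ring
      have heq := ((Em m).toAffine.equation_iff x y).mp hQ'.1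
      simp only [Em, WeierstrassCurve.toAffine] at heq
      rw [slope_of_Y_ne rfl hy, slope_of_X_ne hxPR] at h1
      simp only [addX, negY, Em, WeierstrassCurve.toAffine] at h1
      have h2y : y + y ≠ 0 := fun h => hy0 (by linarith)
      have h2y' : y - (-y - x * 0 - 0) ≠ 0 := by intro h; apply h2y; linear_combination h
      field_simp at h1
      -- the quartic relation for x
      have hm2 : ((m:ℚ))^2 ≠ 0 := pow_ne_zero _ hm0
      have hG : (m:ℚ)^2*x^4 - 4*(2*(m:ℚ)^4-2*(m:ℚ)^2+1)*x^3 + 2*(m:ℚ)^2*x^2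
          + (4*(2*(m:ℚ)^4-2*(m:ℚ)^2+1)-8*(m:ℚ)^8)*x + (m:ℚ)^2
          - 4*(2*(m:ℚ)^4-2*(m:ℚ)^2+1)*(m:ℚ)^6 = 0 := by
        apply mul_left_cancel₀ hm2
        rw [mul_zero]
        linear_combination h1 + (8*(m:ℚ)^4*x + 4*(m:ℚ)^2*(2*(m:ℚ)^4-2*(m:ℚ)^2+1)) * heq
      -- integerize
      set a : ℤ := x.num with ha
      set b : ℤ := (x.den : ℤ) with hb
      have hb0 : (b:ℚ) ≠ 0 := by
        simp [hb]
      have hxab : x = (a:ℚ) / (b:ℚ) := by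
        rw [ha, hb]; exact_mod_cast (Rat.num_div_den x).symm
      rw [hxab] at hG
      field_simp at hG
      have hEQ : ((m^2*a^4 - 4*(2*m^4-2*m^2+1)*a^3*b + 2*m^2*a^2*b^2
          + (4*(2*m^4-2*m^2+1)-8*m^8)*a*b^3 + (m^2-4*(2*m^4-2*m^2+1)*m^6)*b^4 : ℤ) : ℚ) = 0 := by
        have hb6 : ((b:ℚ))^6 ≠ 0 := pow_ne_zero _ hb0
        apply mul_left_cancel₀ hb6
        rw [mul_zero]
        push_cast
        linear_combination (b:ℚ)^6 * hG
      have hEZ : m^2*a^4 - 4*(2*m^4-2*m^2+1)*a^3*b + 2*m^2*a^2*b^2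
          + (4*(2*m^4-2*m^2+1)-8*m^8)*a*b^3 + (m^2-4*(2*m^4-2*m^2+1)*m^6)*b^4 = 0 := by
        exact_mod_cast hEQ
      have hab : Odd a ∨ Odd b := by
        by_contra hc
        push_neg at hc
        rw [Int.not_odd_iff_even, Int.not_odd_iff_even] at hc
        obtain ⟨hea, heb⟩ := hc
        have h2a : (2:ℕ) ∣ x.num.natAbs := by
          rw [← Int.natAbs_even] at hea
          exact hea.two_dvd
        have h2b : (2:ℕ) ∣ x.den := by
          have : Even x.den := by
            have := heb
            rw [hb, Int.even_coe_nat] at this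
            exact this
          exact this.two_dvd
        have := Nat.dvd_gcd h2a h2b
        rw [Nat.Coprime.gcd_eq_one x.reduced] at this
        norm_num at this
      exact keyZ m a b hodd hab hEZ
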